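/- arXiv:1105.1799 — 3 statements merged into one kernel-verified Lean document; each statement's English description precedes it below -/
import Mathlib

section
/- Let Λ be a frame, let c ∈ Λ be a compact element, and let a ∈ Λ satisfy ¬ c ≤ a. Then the set S = {x ∈ Λ | a ≤ x and ¬ c ≤ x} has a maximal element, and every maximal element of S is a prime element of Λ. In particular, there exists a prime element p with a ≤ p and ¬ c ≤ p. -/
/-- An element `p` of a lattice with top is prime if `p ≠ ⊤` and
`x ⊓ y ≤ p` implies `x ≤ p` or `y ≤ p`. -/
def IsPrimeElem {Λ : Type*} [Lattice Λ] [OrderTop Λ] (p : Λ) : Prop :=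
  p ≠ ⊤ ∧ ∀ x y : Λ, x ⊓ y ≤ p → x ≤ p ∨ y ≤ p

/-- The December 2024 Mathlib definition of a compact element of a complete lattice. -/
def CompleteLattice.IsCompactElement {α : Type*} [CompleteLattice α] (k : α) :=
  ∀ s : Set α, k ≤ sSup s → ∃ t : Finset α, ↑t ⊆ s ∧ k ≤ t.sup id

theorem stmt2 {Λ : Type*} [Order.Frame Λ] (c a : Λ)
    (hc : CompleteLattice.IsCompactElement c) (hca : ¬ c ≤ a) :
    (∃ m, (a ≤ m ∧ ¬ c ≤ m) ∧ ∀ x, (a ≤ x ∧ ¬ c ≤ x) → m ≤ x → x = m) ∧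
    (∀ m, (a ≤ m ∧ ¬ c ≤ m) → (∀ x, (a ≤ x ∧ ¬ c ≤ x) → m ≤ x → x = m) →
      IsPrimeElem m) ∧
    (∃ p, IsPrimeElem p ∧ a ≤ p ∧ ¬ c ≤ p) := by
  have hdir := (CompleteLattice.isCompactElement_iff_le_of_directed_sSup_le Λ c).mp
    ((CompleteLattice.isCompactElement_iff_exists_le_sSup_of_le_sSup Λ c).mpr hc)
  have hmax : ∃ m, (a ≤ m ∧ ¬ c ≤ m) ∧ ∀ x, (a ≤ x ∧ ¬ c ≤ x) → m ≤ x → x = m := by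
    obtain ⟨m, _, hm, hmax⟩ := zorn_le_nonempty₀ {x | a ≤ x ∧ ¬ c ≤ x}
      (fun C hCs hC y hy => by
        refine ⟨sSup C, ⟨le_trans (hCs hy).1 (le_sSup hy), fun hcS => ?_⟩,
          fun z hz => le_sSup hz⟩
        obtain ⟨x, hx, hcx⟩ := hdir C ⟨y, hy⟩ hC.directedOn hcS
        exact (hCs hx).2 hcx) a ⟨le_rfl, hca⟩
    exact ⟨m, hm, fun x hx hmx => le_antisymm (hmax hx hmx) hmx⟩
  have hprime : ∀ m, (a ≤ m ∧ ¬ c ≤ m) → (∀ x, (a ≤ x ∧ ¬ c ≤ x) → m ≤ x → x = m) →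
      IsPrimeElem m := by
    intro m ⟨ham, hcm⟩ hmax
    constructor
    · rintro rfl; exact hcm le_top
    · intro x y hxy
      by_contra h
      push_neg at h
      obtain ⟨hx, hy⟩ := h
      have key : ∀ z : Λ, ¬ z ≤ m → c ≤ m ⊔ z := by
        intro z hz
        by_contra hcz
        exact hz (le_sup_right.trans
          (hmax (m ⊔ z) ⟨ham.trans le_sup_left, hcz⟩ le_sup_left).le)
      have : c ≤ (m ⊔ x) ⊓ (m ⊔ y) := le_inf (key x hx) (key y hy)
      rw [← sup_inf_left] at this
      exact hcm (this.trans (sup_le le_rfl hxy))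
  exact ⟨hmax, hprime, by
    obtain ⟨m, hm, hmx⟩ := hmax
    exact ⟨m, hprime m hm hmx, hm.1, hm.2⟩⟩
end

section
/- Let X be a sober topological space, i.e., X is T0 and every nonempty irreducible closed subset of X has a generic point. Equip the set FrameHom (Opens X) Prop of frame homomorphisms from the open-set lattice of X to Prop with the topology whose open sets are exactly the sets {h | h U} for U an open set of X. Then the map sending x ∈ X to the frame homomorphism (U ↦ x ∈ U) is a homeomorphism from X onto FrameHom (Opens X) Prop. -/
open TopologicalSpace

/-- The topology on the set of frame homomorphisms `Opens X → Prop` whose open sets are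
the sets `{h | h U}` for `U` an open set of `X`. -/
instance pointsTopology (X : Type*) [TopologicalSpace X] :
    TopologicalSpace (FrameHom (Opens X) Prop) :=
  TopologicalSpace.generateFrom
    (Set.range fun U : Opens X => {h : FrameHom (Opens X) Prop | h U})

private lemma isOpen_points_iff {X : Type*} [TopologicalSpace X]
    (s : Set (FrameHom (Opens X) Prop)) :
    IsOpen s ↔ ∃ U : Opens X, s = {h : FrameHom (Opens X) Prop | h U} := by
  constructor
  · intro hs
    induction hs with
    | basic u hu => obtain ⟨U, rfl⟩ := hu; exact ⟨U, rfl⟩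
    | univ => exact ⟨⊤, by ext h; simp⟩
    | inter s t _ _ ihs iht =>
      obtain ⟨U, rfl⟩ := ihs; obtain ⟨V, rfl⟩ := iht
      exact ⟨U ⊓ V, by ext h; simp⟩
    | sUnion S _ ih =>
      choose f hf using ih
      refine ⟨⨆ t : S, f t t.2, ?_⟩
      ext h
      simp only [Set.mem_sUnion, Set.mem_setOf_eq, map_iSup, iSup_Prop_eq]
      constructor
      · rintro ⟨t, ht, hht⟩
        exact ⟨⟨t, ht⟩, by rwa [hf t ht] at hht⟩
      · rintro ⟨⟨t, ht⟩, hht⟩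
        exact ⟨t, ht, by rw [hf t ht]; exact hht⟩
  · rintro ⟨U, rfl⟩
    exact TopologicalSpace.GenerateOpen.basic _ ⟨U, rfl⟩

/-- the evaluation map -/
private def evalPt {X : Type*} [TopologicalSpace X] (x : X) : FrameHom (Opens X) Prop where
  toFun U := x ∈ U
  map_inf' _ _ := rfl
  map_top' := rfl
  map_sSup' S := by simp [Prop.exists_iff]

private lemma evalPt_surjective {X : Type*} [TopologicalSpace X] [QuasiSober X]
    (h : FrameHom (Opens X) Prop) : ∃ x : X, evalPt x = h := by
  classical
  set V : Opens X := sSup {U : Opens X | ¬ h U} with hVdef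
  have hVnot : ¬ h V := by
    intro hh
    rw [hVdef, map_sSup, sSup_Prop_eq] at hh
    obtain ⟨p, ⟨U, hU, rfl⟩, hp⟩ := hh
    exact hU hp
  have key : ∀ U : Opens X, h U ↔ ((U : Set X) ∩ (↑V)ᶜ).Nonempty := by
    intro U
    constructor
    · intro hU
      by_contra hempty
      have hsub : (U : Set X) ⊆ (V : Set X) := by
        intro x hx
        by_contra hxV
        exact hempty ⟨x, hx, hxV⟩
      have : U ≤ V := hsub
      exact hVnot (OrderHomClass.mono h this hU)
    · rintro ⟨x, hxU, hxV⟩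
      by_contra hU
      exact hxV (le_sSup (show U ∈ {U : Opens X | ¬ h U} from hU) hxU)
  have hZclosed : IsClosed ((↑V : Set X)ᶜ) := V.2.isClosed_compl
  have hZirr : IsIrreducible ((↑V : Set X)ᶜ) := by
    constructor
    · have := (key ⊤).mp (by rw [map_top]; trivial)
      obtain ⟨x, -, hx⟩ := this
      exact ⟨x, hx⟩
    · intro u v hu hv hune hvne
      have hu' : h ⟨u, hu⟩ := (key _).mpr
        (by obtain ⟨y, hy1, hy2⟩ := hune; exact ⟨y, hy2, hy1⟩)
      have hv' : h ⟨v, hv⟩ := (key _).mpr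
        (by obtain ⟨y, hy1, hy2⟩ := hvne; exact ⟨y, hy2, hy1⟩)
      have huv : h (⟨u, hu⟩ ⊓ ⟨v, hv⟩) := by
        rw [map_inf]; exact ⟨hu', hv'⟩
      obtain ⟨w, hw1, hw2⟩ := (key _).mp huv
      exact ⟨w, hw2, hw1⟩
  obtain ⟨x, hx⟩ := QuasiSober.sober hZirr hZclosed
  refine ⟨x, ?_⟩
  ext U
  show (x ∈ U) ↔ h U
  rw [key U]
  unfold IsGenericPoint at hx
  constructor
  · intro hxU
    refine ⟨x, hxU, ?_⟩
    rw [← hx]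
    exact subset_closure rfl
  · rintro ⟨y, hyU, hyZ⟩
    rw [← hx] at hyZ
    obtain ⟨z, hz1, hz2⟩ := mem_closure_iff.mp hyZ U U.2 hyU
    rwa [Set.mem_singleton_iff.mp hz2] at hz1

theorem stmt10 {X : Type*} [TopologicalSpace X] [T0Space X] [QuasiSober X] :
    (∀ s : Set (FrameHom (Opens X) Prop),
        IsOpen s ↔ ∃ U : Opens X, s = {h : FrameHom (Opens X) Prop | h U}) ∧
    ∃ e : X ≃ₜ FrameHom (Opens X) Prop, ∀ (x : X) (U : Opens X), e x U ↔ x ∈ U := by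
  refine ⟨isOpen_points_iff, ?_⟩
  have hinj : Function.Injective (evalPt (X := X)) := by
    intro x y hxy
    refine ((inseparable_iff_forall_isOpen (x := x) (y := y)).mpr ?_).eq
    intro s hs
    have := congrArg (fun h : FrameHom (Opens X) Prop => h ⟨s, hs⟩) hxy
    exact iff_of_eq this
  have hbij : Function.Bijective (evalPt (X := X)) :=
    ⟨hinj, fun h => evalPt_surjective h⟩
  let e : X ≃ FrameHom (Opens X) Prop := Equiv.ofBijective _ hbij
  have hcont : Continuous (evalPt (X := X)) := by
    rw [continuous_def]
    intro s hs
    obtain ⟨U, rfl⟩ := (isOpen_points_iff s).mp hs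
    have : evalPt (X := X) ⁻¹' {h | h U} = (U : Set X) := rfl
    rw [this]; exact U.2
  have hopen : IsOpenMap (evalPt (X := X)) := by
    intro s hs
    rw [isOpen_points_iff]
    refine ⟨⟨s, hs⟩, ?_⟩
    ext h
    obtain ⟨x, rfl⟩ := hbij.2 h
    constructor
    · rintro ⟨y, hy, hyx⟩
      rw [← hinj hyx]
      exact hy
    · intro hx
      exact ⟨x, hx, rfl⟩
  exact ⟨Equiv.toHomeomorphOfContinuousOpen e hcont hopen, fun x U => Iff.rfl⟩
end

section
/- Let X be a T0 topological space whose open sets satisfy the descending chain condition (there is no infinite strictly decreasing sequence of open sets; equivalently, the order < on Opens X is well-founded). Then for every point x ∈ X there exist open sets U and V of X such that U \ V = {x}. -/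
theorem stmt12 {X : Type*} [TopologicalSpace X] [T0Space X]
    [WellFoundedLT (TopologicalSpace.Opens X)] (x : X) :
    ∃ U V : TopologicalSpace.Opens X, (U : Set X) \ (V : Set X) = {x} := by
  obtain ⟨U, hxU, hmin⟩ := (wellFounded_lt (α := TopologicalSpace.Opens X)).has_min
    {U : TopologicalSpace.Opens X | x ∈ U} ⟨⊤, trivial⟩
  have hV : IsOpen ((U : Set X) \ {x}) := by
    rw [isOpen_iff_forall_mem_open]
    rintro y ⟨hyU, hyx⟩
    obtain ⟨W, hW, hxor⟩ := exists_isOpen_xor'_mem (show x ≠ y from fun h => hyx h.symm)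
    rcases hxor with ⟨hxW, hyW⟩ | ⟨hyW, hxW⟩
    · exact absurd (hmin (U ⊓ ⟨W, hW⟩) ⟨hxU, hxW⟩)
        (fun h => h (lt_of_le_of_ne inf_le_left (fun he => hyW (by rw [← he] at hyU; exact hyU.2))))
    · exact ⟨W ∩ U, fun z ⟨hzW, hzU⟩ => ⟨hzU, fun h => hxW (h ▸ hzW)⟩,
        hW.inter U.isOpen, hyW, hyU⟩
  refine ⟨U, ⟨(U : Set X) \ {x}, hV⟩, ?_⟩
  ext z
  simp only [Set.mem_diff, Set.mem_singleton_iff, TopologicalSpace.Opens.coe_mk, not_and, not_not]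
  constructor
  · rintro ⟨hzU, h⟩
    exact h hzU
  · rintro rfl
    exact ⟨hxU, fun h => rfl⟩
end
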